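/- Let (X,d) be a metric space and let (x_n) be a Cauchy sequence in X. Let y, z ∈ X be distinct points such that neither d(x_n,y) → 0 nor d(x_n,z) → 0. Then d(x_n,x_m)·d(y,z)/(d(x_n,y)·d(x_m,z)) → 0 as n,m → ∞. -/

import Mathlib

open Filter

/-- For a Cauchy sequence in a metric space and a good pair (y,z),
the c-component ratio of the cross-ratio triple tends to 0. -/
theorem cauchy_crt_component_tendsto_zero {X : Type*} [MetricSpace X]
    (x : ℕ → X) (hx : CauchySeq x) (y z : X) (hyz : y ≠ z)
    (hy : ¬ Tendsto (fun n => dist (x n) y) atTop (nhds 0))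
    (hz : ¬ Tendsto (fun n => dist (x n) z) atTop (nhds 0)) :
    Tendsto
      (fun p : ℕ × ℕ =>
        dist (x p.1) (x p.2) * dist y z / (dist (x p.1) y * dist (x p.2) z))
      (atTop ×ˢ atTop) (nhds 0) := by
  have hcy : CauchySeq (fun n => dist (x n) y) :=
    ((LipschitzWith.dist_left y).uniformContinuous).comp_cauchySeq hx
  have hcz : CauchySeq (fun n => dist (x n) z) :=
    ((LipschitzWith.dist_left z).uniformContinuous).comp_cauchySeq hx
  obtain ⟨L, hL⟩ := cauchySeq_tendsto_of_complete hcy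
  obtain ⟨M, hM⟩ := cauchySeq_tendsto_of_complete hcz
  have hLpos : L ≠ 0 := fun h => hy (h ▸ hL)
  have hMpos : M ≠ 0 := fun h => hz (h ▸ hM)
  have hnum : Tendsto (fun p : ℕ × ℕ => dist (x p.1) (x p.2) * dist y z)
      (atTop ×ˢ atTop) (nhds 0) := by
    have := cauchySeq_iff_tendsto_dist_atTop_0.mp hx
    rw [prod_atTop_atTop_eq]
    simpa using this.mul_const (dist y z)
  have hden : Tendsto (fun p : ℕ × ℕ => dist (x p.1) y * dist (x p.2) z)
      (atTop ×ˢ atTop) (nhds (L * M)) :=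
    (hL.comp tendsto_fst).mul (hM.comp tendsto_snd)
  have := hnum.div hden (mul_ne_zero hLpos hMpos)
  simpa [Pi.div_def] using this
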